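/- Let V(t) = δξ(t)^T δξ(t) where δξ solves δξ̇ = −(1/2)K_o J(q_f(t))^T J(q(t)) δξ, with ‖q(t)‖ = 1, ‖q_f(t) − q(t)‖ ≤ ε_q, K_o symmetric positive definite, and λ_o := λ_min(K_o) − λ_max(K_o)ε_q > 0. Then ‖δξ(t)‖ ≤ ‖δξ(0)‖·e^{−(λ_o/2)t} for all t ≥ 0. -/

import Mathlib

open Matrix

noncomputable def skew (u : Fin 3 → ℝ) : Matrix (Fin 3) (Fin 3) ℝ :=
  !![0, -u 2, u 1; u 2, 0, -u 0; -u 1, u 0, 0]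

noncomputable def Jq (x : Fin 4 → ℝ) : Matrix (Fin 4) (Fin 3) ℝ :=
  Matrix.of (Fin.cons (fun j => -x j.succ)
    (fun i => (x 0 • (1 : Matrix (Fin 3) (Fin 3) ℝ) + skew (fun k => x k.succ)) i))

lemma Jq_succ (x : Fin 4 → ℝ) (i : Fin 3) :
    Jq x i.succ = (x 0 • (1 : Matrix (Fin 3) (Fin 3) ℝ) + skew (fun k => x k.succ)) i := rfl

lemma Jq_row0 (x : Fin 4 → ℝ) : Jq x 0 = ![-x 1, -x 2, -x 3] := by
  funext j; fin_cases j <;> simp [Jq] <;> rfl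

lemma Jq_row1 (x : Fin 4 → ℝ) : Jq x 1 = ![x 0, -x 3, x 2] := by
  rw [show (1 : Fin 4) = Fin.succ 0 from rfl, Jq_succ]
  funext j; fin_cases j <;> simp [skew, Matrix.one_apply] <;> rfl

lemma Jq_row2 (x : Fin 4 → ℝ) : Jq x 2 = ![x 3, x 0, -x 1] := by
  rw [show (2 : Fin 4) = Fin.succ 1 from rfl, Jq_succ]
  funext j; fin_cases j <;> simp [skew, Matrix.one_apply] <;> rfl

lemma Jq_row3 (x : Fin 4 → ℝ) : Jq x 3 = ![-x 2, x 1, x 0] := by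
  rw [show (3 : Fin 4) = Fin.succ 2 from rfl, Jq_succ]
  funext j; fin_cases j <;> simp [skew, Matrix.one_apply] <;> rfl

lemma Jq_dot (x : Fin 4 → ℝ) (u v : Fin 3 → ℝ) :
    (Jq x *ᵥ u) ⬝ᵥ (Jq x *ᵥ v) = (x 0 ^ 2 + x 1 ^ 2 + x 2 ^ 2 + x 3 ^ 2) * (u ⬝ᵥ v) := by
  simp [Matrix.mulVec, dotProduct, Fin.sum_univ_four, Fin.sum_univ_three,
    Jq_row0, Jq_row1, Jq_row2, Jq_row3]
  ring

lemma Jq_lin (x y : Fin 4 → ℝ) (u : Fin 3 → ℝ) :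
    Jq y *ᵥ u = Jq x *ᵥ u + Jq (fun i => y i - x i) *ᵥ u := by
  funext i
  fin_cases i <;>
    simp [Matrix.mulVec, dotProduct, Fin.sum_univ_three,
      Jq_row0, Jq_row1, Jq_row2, Jq_row3] <;> ring

lemma dot_nonneg3 {n : ℕ} (a : Fin n → ℝ) : 0 ≤ a ⬝ᵥ a := by
  have : a ⬝ᵥ a = ∑ i : Fin n, a i ^ 2 := by
    simp [dotProduct, sq]
  rw [this]; exact Finset.sum_nonneg fun i _ => sq_nonneg _

/-- Cauchy–Schwarz for the dot product on `Fin n → ℝ`. -/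
lemma dot_cs {n : ℕ} (a b : Fin n → ℝ) : (a ⬝ᵥ b) ^ 2 ≤ (a ⬝ᵥ a) * (b ⬝ᵥ b) := by
  have h : ∀ t : ℝ, 0 ≤ (b ⬝ᵥ b) * (t * t) + (2 * (a ⬝ᵥ b)) * t + (a ⬝ᵥ a) := by
    intro t
    have h0 : 0 ≤ ∑ i : Fin n, (a i + t * b i) ^ 2 :=
      Finset.sum_nonneg fun i _ => sq_nonneg _
    have he : ∑ i : Fin n, (a i + t * b i) ^ 2
        = (b ⬝ᵥ b) * (t * t) + (2 * (a ⬝ᵥ b)) * t + (a ⬝ᵥ a) := by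
      simp only [dotProduct, Finset.sum_mul, Finset.mul_sum, mul_comm, mul_assoc]
      rw [← Finset.sum_add_distrib, ← Finset.sum_add_distrib]
      apply Finset.sum_congr rfl
      intro i _
      ring
    linarith [he ▸ h0]
  have hd := discrim_le_zero h
  rw [discrim] at hd
  nlinarith [hd]

lemma dot_symmK (K : Matrix (Fin 3) (Fin 3) ℝ) (hKs : K.IsSymm) (a b : Fin 3 → ℝ) :
    a ⬝ᵥ (K *ᵥ b) = b ⬝ᵥ (K *ᵥ a) := by
  rw [Matrix.dotProduct_mulVec, ← Matrix.mulVec_transpose, hKs.eq, dotProduct_comm]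

/-- Cauchy–Schwarz for the bilinear form of a positive semidefinite symmetric matrix. -/
lemma form_cs (K : Matrix (Fin 3) (Fin 3) ℝ) (hKs : K.IsSymm)
    (hK0 : ∀ v : Fin 3 → ℝ, 0 ≤ v ⬝ᵥ (K *ᵥ v)) (u v : Fin 3 → ℝ) :
    (u ⬝ᵥ (K *ᵥ v)) ^ 2 ≤ (u ⬝ᵥ (K *ᵥ u)) * (v ⬝ᵥ (K *ᵥ v)) := by
  have h : ∀ t : ℝ, 0 ≤ (v ⬝ᵥ (K *ᵥ v)) * (t * t) + (2 * (u ⬝ᵥ (K *ᵥ v))) * t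
      + (u ⬝ᵥ (K *ᵥ u)) := by
    intro t
    have h0 := hK0 (u + t • v)
    simp only [Matrix.mulVec_add, Matrix.mulVec_smul, add_dotProduct,
      dotProduct_add, smul_dotProduct, dotProduct_smul,
      smul_eq_mul] at h0
    rw [dot_symmK K hKs v u] at h0
    nlinarith [h0]
  have hd := discrim_le_zero h
  rw [discrim] at hd
  nlinarith [hd]

set_option maxHeartbeats 1000000 in
theorem stmt16 (q qf : ℝ → Fin 4 → ℝ) (εq lammin lammax lamo : ℝ) (hεq : 0 < εq)
    (K : Matrix (Fin 3) (Fin 3) ℝ) (hKs : K.IsSymm) (hKpd : K.PosDef)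
    (hmin : ∀ v : Fin 3 → ℝ, lammin * (v ⬝ᵥ v) ≤ v ⬝ᵥ (K *ᵥ v))
    (hmax : ∀ v : Fin 3 → ℝ, v ⬝ᵥ (K *ᵥ v) ≤ lammax * (v ⬝ᵥ v))
    (hqcont : Continuous q) (hqfcont : Continuous qf)
    (hq : ∀ t, 0 ≤ t → ∑ i, q t i ^ 2 = 1)
    (hqf : ∀ t, 0 ≤ t → Real.sqrt (∑ i, (qf t i - q t i) ^ 2) ≤ εq)
    (hlamo : lamo = lammin - lammax * εq) (hpos : 0 < lamo)
    (ξ : ℝ → Fin 3 → ℝ)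
    (hξ : ∀ t, 0 ≤ t →
      HasDerivAt ξ (-(1 / 2 : ℝ) • ((K * (Jq (qf t))ᵀ * Jq (q t)) *ᵥ ξ t)) t) :
    ∀ t, 0 ≤ t →
      Real.sqrt (ξ t ⬝ᵥ ξ t) ≤ Real.sqrt (ξ 0 ⬝ᵥ ξ 0) * Real.exp (-(lamo / 2) * t) := by
  have hK0 : ∀ v : Fin 3 → ℝ, 0 ≤ v ⬝ᵥ (K *ᵥ v) := by
    intro v
    have := hKpd.posSemidef.dotProduct_mulVec_nonneg v
    simpa using this
  have hlammax : 0 ≤ lammax := by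
    have h1 := hK0 (fun _ => 1)
    have h2 := hmax (fun _ => 1)
    have h3 : (fun _ : Fin 3 => (1:ℝ)) ⬝ᵥ (fun _ : Fin 3 => (1:ℝ)) = 3 := by
      norm_num [dotProduct, Fin.sum_univ_three]
    rw [h3] at h2
    nlinarith
  -- operator-norm bound for K
  have hKop : ∀ u : Fin 3 → ℝ, (K *ᵥ u) ⬝ᵥ (K *ᵥ u) ≤ lammax ^ 2 * (u ⬝ᵥ u) := by
    intro u
    set w := K *ᵥ u with hw
    have h1 : u ⬝ᵥ (K *ᵥ w) = w ⬝ᵥ w := by rw [dot_symmK K hKs u w]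
    have h2 : (u ⬝ᵥ (K *ᵥ w)) ^ 2 ≤ (u ⬝ᵥ (K *ᵥ u)) * (w ⬝ᵥ (K *ᵥ w)) :=
      form_cs K hKs hK0 u w
    have h3 := hmax u
    have h4 := hmax w
    have h6 := hK0 w
    have huu := dot_nonneg3 u
    have hww := dot_nonneg3 w
    rw [h1] at h2
    have h7 : (w ⬝ᵥ w) ^ 2 ≤ (lammax * (u ⬝ᵥ u)) * (lammax * (w ⬝ᵥ w)) := by
      calc (w ⬝ᵥ w) ^ 2 ≤ (u ⬝ᵥ (K *ᵥ u)) * (w ⬝ᵥ (K *ᵥ w)) := h2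
        _ ≤ (lammax * (u ⬝ᵥ u)) * (lammax * (w ⬝ᵥ w)) :=
            mul_le_mul h3 h4 h6 (by nlinarith)
    rcases eq_or_lt_of_le hww with h | h
    · rw [← h]; positivity
    · nlinarith [h7, h]
  -- the core pointwise estimate
  have core : ∀ t, 0 ≤ t → lamo * (ξ t ⬝ᵥ ξ t) ≤
      ξ t ⬝ᵥ ((K * (Jq (qf t))ᵀ * Jq (q t)) *ᵥ ξ t) := by
    intro t ht
    set u := ξ t with hu
    set x := q t with hx
    set xf := qf t with hxf
    set w := K *ᵥ u with hw
    have hxn : x 0 ^ 2 + x 1 ^ 2 + x 2 ^ 2 + x 3 ^ 2 = 1 := by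
      have h := hq t ht
      rw [Fin.sum_univ_four] at h
      exact h
    have hδn : (xf 0 - x 0) ^ 2 + (xf 1 - x 1) ^ 2 + (xf 2 - x 2) ^ 2 + (xf 3 - x 3) ^ 2
        ≤ εq ^ 2 := by
      have h1 := hqf t ht
      have h2 : (0:ℝ) ≤ ∑ i, (xf i - x i) ^ 2 :=
        Finset.sum_nonneg fun i _ => sq_nonneg _
      have h3 : ∑ i, (xf i - x i) ^ 2 ≤ εq ^ 2 := by
        nlinarith [Real.sq_sqrt h2, Real.sqrt_nonneg (∑ i, (xf i - x i) ^ 2)]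
      rw [Fin.sum_univ_four] at h3
      exact h3
    have hrw : u ⬝ᵥ ((K * (Jq xf)ᵀ * Jq x) *ᵥ u) = (Jq xf *ᵥ w) ⬝ᵥ (Jq x *ᵥ u) := by
      rw [← Matrix.mulVec_mulVec, ← Matrix.mulVec_mulVec, Matrix.dotProduct_mulVec (v := u),
        ← Matrix.mulVec_transpose, hKs.eq, Matrix.dotProduct_mulVec, Matrix.vecMul_transpose]
    rw [hrw]
    rw [Jq_lin x xf w, add_dotProduct]
    have hmain : (Jq x *ᵥ w) ⬝ᵥ (Jq x *ᵥ u) = w ⬝ᵥ u := by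
      rw [Jq_dot, hxn, one_mul]
    have hwu : lammin * (u ⬝ᵥ u) ≤ w ⬝ᵥ u := by
      calc lammin * (u ⬝ᵥ u) ≤ u ⬝ᵥ (K *ᵥ u) := hmin u
        _ = w ⬝ᵥ u := dotProduct_comm u w
    -- cross term bound
    set c := (Jq (fun i => xf i - x i) *ᵥ w) ⬝ᵥ (Jq x *ᵥ u) with hc
    set U := u ⬝ᵥ u with hU2
    set W := w ⬝ᵥ w with hW2
    have hU0 : 0 ≤ U := dot_nonneg3 u
    have hW0 : 0 ≤ W := dot_nonneg3 w
    have hWle : W ≤ lammax ^ 2 * U := hKop u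
    have h1 : c ^ 2 ≤ ((xf 0 - x 0) ^ 2 + (xf 1 - x 1) ^ 2 + (xf 2 - x 2) ^ 2
        + (xf 3 - x 3) ^ 2) * W * U := by
      have h := dot_cs (Jq (fun i => xf i - x i) *ᵥ w) (Jq x *ᵥ u)
      rw [Jq_dot, Jq_dot, hxn, one_mul] at h
      calc c ^ 2 ≤ (((xf 0 - x 0) ^ 2 + (xf 1 - x 1) ^ 2 + (xf 2 - x 2) ^ 2
            + (xf 3 - x 3) ^ 2) * W) * U := h
        _ = _ := by ring
    have hcross : c ^ 2 ≤ (εq * (lammax * U)) ^ 2 := by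
      nlinarith [h1, hδn, hWle, hU0, hW0, sq_nonneg εq, sq_nonneg lammax,
        mul_le_mul_of_nonneg_right (mul_le_mul_of_nonneg_right hδn hW0) hU0,
        mul_le_mul_of_nonneg_right (mul_le_mul_of_nonneg_left hWle (sq_nonneg εq)) hU0]
    have hB0 : 0 ≤ εq * (lammax * U) := by positivity
    have hcge : -(εq * (lammax * U)) ≤ c := by nlinarith [hcross, hB0]
    rw [hmain, hlamo]
    nlinarith [hwu, hcge]
  -- Lyapunov argument
  set V : ℝ → ℝ := fun t => ξ t ⬝ᵥ ξ t with hV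
  set g : ℝ → ℝ := fun t => V t * Real.exp (lamo * t) with hg
  have hVderiv : ∀ t, 0 ≤ t →
      HasDerivAt V (-(ξ t ⬝ᵥ ((K * (Jq (qf t))ᵀ * Jq (q t)) *ᵥ ξ t))) t := by
    intro t ht
    have hd := hξ t ht
    set d : Fin 3 → ℝ := -(1 / 2 : ℝ) • ((K * (Jq (qf t))ᵀ * Jq (q t)) *ᵥ ξ t) with hdd
    have hcomp : ∀ i, HasDerivAt (fun s => ξ s i) (d i) t := fun i =>
      hasDerivAt_pi.1 hd i
    have hsum : HasDerivAt (fun s => ∑ i : Fin 3, ξ s i * ξ s i)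
        (∑ i : Fin 3, (d i * ξ t i + ξ t i * d i)) t := by
      apply HasDerivAt.fun_sum
      intro i _
      exact (hcomp i).mul (hcomp i)
    have heq : (∑ i : Fin 3, (d i * ξ t i + ξ t i * d i))
        = -(ξ t ⬝ᵥ ((K * (Jq (qf t))ᵀ * Jq (q t)) *ᵥ ξ t)) := by
      simp only [hdd, Pi.smul_apply, smul_eq_mul, dotProduct, Fin.sum_univ_three]
      ring
    rw [heq] at hsum
    have : V = fun s => ∑ i : Fin 3, ξ s i * ξ s i := by
      funext s; simp [hV, dotProduct]
    rw [this]
    exact hsum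
  have hgderiv : ∀ t, 0 ≤ t → HasDerivAt g
      ((-(ξ t ⬝ᵥ ((K * (Jq (qf t))ᵀ * Jq (q t)) *ᵥ ξ t))) * Real.exp (lamo * t)
        + V t * (lamo * Real.exp (lamo * t))) t := by
    intro t ht
    have he : HasDerivAt (fun s => Real.exp (lamo * s)) (lamo * Real.exp (lamo * t)) t := by
      have h1 : HasDerivAt (fun s : ℝ => lamo * s) lamo t := by
        simpa using (hasDerivAt_id t).const_mul lamo
      have := h1.exp
      simpa [mul_comm] using this
    exact (hVderiv t ht).mul he
  have hganti : AntitoneOn g (Set.Ici 0) := by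
    apply antitoneOn_of_deriv_nonpos (convex_Ici 0)
    · intro t ht
      exact ((hgderiv t ht).continuousAt).continuousWithinAt
    · rw [interior_Ici]
      intro t ht
      exact ((hgderiv t (le_of_lt ht)).differentiableAt).differentiableWithinAt
    · rw [interior_Ici]
      intro t ht
      rw [(hgderiv t (le_of_lt ht)).deriv]
      have hcore := core t (le_of_lt ht)
      have hexp := Real.exp_pos (lamo * t)
      have hVnn : 0 ≤ V t := dot_nonneg3 (ξ t)
      nlinarith [hcore, hexp, hVnn]
  intro t ht
  have hVt : V t * Real.exp (lamo * t) ≤ V 0 := by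
    have h := hganti (Set.self_mem_Ici) ht ht
    simpa [hg] using h
  have hVle : V t ≤ V 0 * Real.exp (-(lamo * t)) := by
    calc V t = (V t * Real.exp (lamo * t)) * Real.exp (-(lamo * t)) := by
          rw [mul_assoc, ← Real.exp_add]; simp
      _ ≤ V 0 * Real.exp (-(lamo * t)) :=
          mul_le_mul_of_nonneg_right hVt (Real.exp_nonneg _)
  have hs := Real.sqrt_le_sqrt hVle
  calc Real.sqrt (ξ t ⬝ᵥ ξ t) = Real.sqrt (V t) := rfl
    _ ≤ Real.sqrt (V 0 * Real.exp (-(lamo * t))) := hs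
    _ = Real.sqrt (V 0) * Real.sqrt (Real.exp (-(lamo * t))) :=
        Real.sqrt_mul (dot_nonneg3 (ξ 0)) _
    _ = Real.sqrt (ξ 0 ⬝ᵥ ξ 0) * Real.exp (-(lamo / 2) * t) := by
        rw [← Real.exp_half]
        congr 1
        ring
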